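/- Let Ξ̃ ⊂ ℝ^d be open convex with int(bc_{Ξ̃}) ≠ ∅, let Ξ be open connected with x₁ + Ξ̃ ⊂ Ξ ⊂ x₀ + Ξ̃, fix ν ∈ int(bc_{Ξ̃}) and ξ ∈ ℝ^d, and for ε > 0 set E_ε(x) = e^{ε x·ν + 2πi x·ξ} χ_Ξ(x). Suppose E_ε ∈ L²(Ξ) for all small ε > 0. Then for every R > 0, the limit lim_{ε→0⁺} (e^{ε z·ν}/‖E_ε‖²) ∫ e^{2ε y·ν} χ_Ξ(z+y) χ_Ξ(y) dy = 1 holds uniformly for |z| ≤ R. -/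

import Mathlib

open MeasureTheory Set Pointwise
open scoped ENNReal

noncomputable section

abbrev Ed (d : ℕ) := EuclideanSpace ℝ (Fin d)

def charCone {d : ℕ} (Ω : Set (Ed d)) : Set (Ed d) :=
  {x | ∀ t : ℝ, 0 < t → ∀ p ∈ Ω, p + t • x ∈ Ω}

def barrierCone {d : ℕ} (Ω : Set (Ed d)) : Set (Ed d) :=
  {θ | ∃ M : ℝ, ∀ p ∈ Ω, (inner ℝ p θ : ℝ) ≤ M}

private lemma aux18 {δ Q eM : ℝ} (hδ : 0 < δ) (h1 : 1 ≤ eM) (h2 : eM < 1 + δ)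
    (hub : Q ≤ eM) (hlb : eM⁻¹ ≤ Q) : |Q - 1| < δ := by
  have hpos : (0:ℝ) < eM := lt_of_lt_of_le one_pos h1
  rw [abs_lt]
  constructor
  · have h3 : (1 + δ)⁻¹ < eM⁻¹ := inv_strictAnti₀ hpos h2
    have h4 : 1 - δ < (1 + δ)⁻¹ := by
      rw [inv_eq_one_div, lt_div_iff₀ (by linarith)]
      nlinarith
    linarith
  · linarith

/-- with `E_ε(x) = e^{ε x·ν + 2πi x·ξ} χ_Ξ(x)` one has
`lim_{ε→0⁺} e^{ε z·ν} ‖E_ε‖⁻² ∫ e^{2ε y·ν} χ_Ξ(z+y)χ_Ξ(y) dy = 1` uniformly on `|z| ≤ R`.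
(Note `‖E_ε‖² = ∫_Ξ e^{2ε y·ν} dy`, independently of `ξ`.) -/
theorem stmt18 {d : ℕ} (Ξt Ξ : Set (Ed d))
    (hconv : Convex ℝ Ξt) (hopen : IsOpen Ξt)
    (hcc : (interior (charCone Ξt)).Nonempty)
    (hbc : (interior (barrierCone Ξt)).Nonempty)
    (hΞo : IsOpen Ξ) (hΞc : IsConnected Ξ)
    (x₀ x₁ : Ed d) (h1 : x₁ +ᵥ Ξt ⊆ Ξ) (h0 : Ξ ⊆ x₀ +ᵥ Ξt)
    (ν : Ed d) (hν : ν ∈ interior (barrierCone Ξt)) (ξ : Ed d)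
    (hE : ∀ ε : ℝ, 0 < ε →
      IntegrableOn (fun y : Ed d => Real.exp (2 * ε * (inner ℝ y ν : ℝ))) Ξ volume) :
    ∀ R : ℝ, 0 < R → ∀ δ : ℝ, 0 < δ → ∃ ε₀ : ℝ, 0 < ε₀ ∧
      ∀ ε : ℝ, 0 < ε → ε < ε₀ → ∀ z : Ed d, ‖z‖ ≤ R →
        |Real.exp (ε * (inner ℝ z ν : ℝ)) /
            (∫ y in Ξ, Real.exp (2 * ε * (inner ℝ y ν : ℝ))) *
            (∫ y in {y : Ed d | y ∈ Ξ ∧ z + y ∈ Ξ},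
              Real.exp (2 * ε * (inner ℝ y ν : ℝ))) - 1| < δ := by
  intro R hR δ hδ
  -- a ball inside the characteristic cone
  obtain ⟨c, hc⟩ := hcc
  obtain ⟨r, hr, hball⟩ := Metric.isOpen_iff.mp isOpen_interior c hc
  have hball' : Metric.ball c r ⊆ charCone Ξt := hball.trans interior_subset
  set lam : ℝ := (R + 1) / r with hlam
  have hlampos : 0 < lam := by positivity
  set u : Ed d := lam • c with hu
  set x₂ : Ed d := x₁ - x₀ + u with hx2
  -- u + z lies in the characteristic cone for ‖z‖ ≤ R
  have hcone : ∀ z : Ed d, ‖z‖ ≤ R → u + z ∈ charCone Ξt := by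
    intro z hz
    have hmemball : c + lam⁻¹ • z ∈ Metric.ball c r := by
      rw [Metric.mem_ball, dist_eq_norm]
      have : c + lam⁻¹ • z - c = lam⁻¹ • z := by abel
      rw [this, norm_smul, norm_inv, Real.norm_eq_abs, abs_of_pos hlampos]
      have : lam⁻¹ * ‖z‖ ≤ lam⁻¹ * R := by
        apply mul_le_mul_of_nonneg_left hz (le_of_lt (inv_pos.mpr hlampos))
      refine lt_of_le_of_lt this ?_
      rw [hlam, inv_div, div_mul_eq_mul_div, div_lt_iff₀ (by linarith)]
      nlinarith
    have hmem := hball' hmemball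
    intro t ht p hp
    have h2 := hmem (t * lam) (by positivity) p hp
    have hzz : (t * lam) • (lam⁻¹ • z) = t • z := by
      rw [smul_smul, mul_assoc, mul_inv_cancel₀ (ne_of_gt hlampos), mul_one]
    have : p + (t * lam) • (c + lam⁻¹ • z) = p + t • (u + z) := by
      rw [hu, smul_add, hzz, smul_add, smul_smul]
    rwa [this] at h2
  -- the key translation inclusion
  have hkey : ∀ z : Ed d, ‖z‖ ≤ R → ∀ p ∈ Ξ, x₂ + z + p ∈ Ξ := by
    intro z hz p hp
    obtain ⟨q, hq, hpq⟩ := h0 hp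
    have hpq' : x₀ + q = p := hpq
    have h3 : q + (1 : ℝ) • (u + z) ∈ Ξt := hcone z hz 1 one_pos q hq
    have h4 : x₁ + (q + (1 : ℝ) • (u + z)) ∈ Ξ := h1 ⟨_, h3, rfl⟩
    have : x₁ + (q + (1 : ℝ) • (u + z)) = x₂ + z + p := by
      rw [one_smul, hx2, ← hpq']
      abel
    rwa [this] at h4
  -- choose ε₀
  set M : ℝ := R * ‖ν‖ + 2 * |(inner ℝ x₂ ν : ℝ)| + 1 with hM
  have hMpos : 0 < M := by positivity
  refine ⟨Real.log (1 + δ) / M, div_pos (Real.log_pos (by linarith)) hMpos, ?_⟩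
  intro ε hε hεlt z hz
  -- notation
  set f : Ed d → ℝ := fun y => Real.exp (2 * ε * (inner ℝ y ν : ℝ)) with hf
  set I : ℝ := ∫ y in Ξ, f y with hI
  set S : Set (Ed d) := {y : Ed d | y ∈ Ξ ∧ z + y ∈ Ξ} with hS
  set J : ℝ := ∫ y in S, f y with hJ
  have hfpos : ∀ y, 0 < f y := fun y => Real.exp_pos _
  have hfint : IntegrableOn f Ξ volume := hE ε hε
  have hSsub : S ⊆ Ξ := fun y hy => hy.1
  have hSm : MeasurableSet S := by
    have : S = Ξ ∩ (fun y => z + y) ⁻¹' Ξ := rfl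
    rw [this]
    exact hΞo.measurableSet.inter (hΞo.measurableSet.preimage (measurable_const_add z))
  have hfintS : IntegrableOn f S volume := hfint.mono_set hSsub
  -- I > 0
  have hIpos : 0 < I := by
    rw [hI, setIntegral_pos_iff_support_of_nonneg_ae
      (Filter.Eventually.of_forall fun y => (hfpos y).le) hfint]
    have : Function.support f = Set.univ := by
      ext y; simp [Function.mem_support, (hfpos y).ne']
    rw [this, Set.univ_inter]
    exact hΞo.measure_pos volume hΞc.nonempty
  -- the translated set
  have hTsub : (fun y => x₂ + y) '' Ξ ⊆ S := by
    rintro _ ⟨p, hp, rfl⟩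
    constructor
    · have := hkey 0 (by simpa using hR.le) p hp
      simpa using this
    · have := hkey z hz p hp
      have h5 : x₂ + z + p = z + (x₂ + p) := by abel
      rwa [h5] at this
  -- ∫ over the translated set equals e^{2ε⟨x₂,ν⟩} I
  have htrans : ∫ y in (fun y => x₂ + y) '' Ξ, f y
      = Real.exp (2 * ε * (inner ℝ x₂ ν : ℝ)) * I := by
    rw [(measurePreserving_add_left volume x₂).setIntegral_image_emb
      (MeasurableEquiv.addLeft x₂).measurableEmbedding f Ξ]
    rw [hI, ← integral_const_mul]
    apply setIntegral_congr_fun hΞo.measurableSet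
    intro y _
    simp only [hf]
    rw [← Real.exp_add, inner_add_left]
    ring_nf
  -- bounds on J
  have hJle : J ≤ I := by
    rw [hJ, hI]
    exact setIntegral_mono_set hfint
      (Filter.Eventually.of_forall fun y => (hfpos y).le)
      (HasSubset.Subset.eventuallyLE hSsub)
  have hJge : Real.exp (2 * ε * (inner ℝ x₂ ν : ℝ)) * I ≤ J := by
    rw [← htrans, hJ]
    exact setIntegral_mono_set hfintS
      (Filter.Eventually.of_forall fun y => (hfpos y).le)
      (HasSubset.Subset.eventuallyLE hTsub)
  have hJpos : 0 < J := lt_of_lt_of_le (by positivity) hJge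
  have hzν : |(inner ℝ z ν : ℝ)| ≤ R * ‖ν‖ := by
    calc |(inner ℝ z ν : ℝ)| ≤ ‖z‖ * ‖ν‖ := abs_real_inner_le_norm z ν
    _ ≤ R * ‖ν‖ := by apply mul_le_mul_of_nonneg_right hz (norm_nonneg ν)
  have hεM : ε * M < Real.log (1 + δ) := by
    have := (lt_div_iff₀ hMpos).mp hεlt
    linarith
  have hexpM : Real.exp (ε * M) < 1 + δ := by
    calc Real.exp (ε * M) < Real.exp (Real.log (1 + δ)) := Real.exp_lt_exp.mpr hεM
    _ = 1 + δ := Real.exp_log (by linarith)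
  -- upper bound
  have hQub : Real.exp (ε * (inner ℝ z ν : ℝ)) / I * J ≤ Real.exp (ε * M) := by
    have h6 : Real.exp (ε * (inner ℝ z ν : ℝ)) / I * J
        ≤ Real.exp (ε * (inner ℝ z ν : ℝ)) := by
      rw [div_mul_eq_mul_div, div_le_iff₀ hIpos]
      nlinarith [Real.exp_pos (ε * (inner ℝ z ν : ℝ)), hJle]
    refine h6.trans (Real.exp_le_exp.mpr ?_)
    have hb1 := (abs_le.mp hzν).2
    have hb2 : (0:ℝ) ≤ |(inner ℝ x₂ ν : ℝ)| := abs_nonneg _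
    have hle : (inner ℝ z ν : ℝ) ≤ M := by rw [hM]; linarith
    exact mul_le_mul_of_nonneg_left hle hε.le
  -- lower bound
  have hQlb : Real.exp (-(ε * M)) ≤ Real.exp (ε * (inner ℝ z ν : ℝ)) / I * J := by
    have h7 : Real.exp (ε * (inner ℝ z ν : ℝ) + 2 * ε * (inner ℝ x₂ ν : ℝ))
        ≤ Real.exp (ε * (inner ℝ z ν : ℝ)) / I * J := by
      rw [div_mul_eq_mul_div, le_div_iff₀ hIpos, Real.exp_add]
      calc Real.exp (ε * (inner ℝ z ν : ℝ)) * Real.exp (2 * ε * (inner ℝ x₂ ν : ℝ)) * I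
          = Real.exp (ε * (inner ℝ z ν : ℝ)) * (Real.exp (2 * ε * (inner ℝ x₂ ν : ℝ)) * I) := by
            ring
        _ ≤ Real.exp (ε * (inner ℝ z ν : ℝ)) * J := by
            exact mul_le_mul_of_nonneg_left hJge (Real.exp_pos _).le
    refine le_trans (Real.exp_le_exp.mpr ?_) h7
    have hsum : -M ≤ (inner ℝ z ν : ℝ) + 2 * (inner ℝ x₂ ν : ℝ) := by
      rw [hM]
      have h8 := (abs_le.mp hzν).1
      have h9 := neg_abs_le ((inner ℝ x₂ ν : ℝ))
      linarith
    nlinarith [mul_le_mul_of_nonneg_left hsum hε.le]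
  rw [Real.exp_neg] at hQlb
  exact aux18 hδ (Real.one_le_exp (by positivity)) hexpM hQub hQlb
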